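/- Let ℏ > 0 and let ψ : ℝ → ℂ be twice continuously differentiable. Write x̂ for the operator of multiplication by x and p̂² for the operator φ ↦ −ℏ²·φ''. Then for every real x, the Weyl quantization of x²p² minus the Born–Jordan quantization of x²p², applied to ψ, equals (ℏ²/6)·ψ(x); explicitly: (1/4)·( x²·p̂²ψ(x) + 2x·(p̂²(x̂ψ))(x) + (p̂²(x̂²ψ))(x) ) − (1/3)·( x²·p̂²ψ(x) + x·(p̂²(x̂ψ))(x) + (p̂²(x̂²ψ))(x) ) = (ℏ²/6)·ψ(x). -/

import Mathlib

theorem weyl_minus_born_jordan_x2p2 (ℏ : ℝ) (hℏ : 0 < ℏ)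
    (ψ : ℝ → ℂ) (hψ : ContDiff ℝ 2 ψ)
    (Psq : (ℝ → ℂ) → ℝ → ℂ)
    (hPsq : ∀ (φ : ℝ → ℂ) (y : ℝ), Psq φ y = -(ℏ : ℂ) ^ 2 * deriv (deriv φ) y)
    (x : ℝ) :
    (1 / 4) * ((x : ℂ) ^ 2 * Psq ψ x
        + 2 * (x : ℂ) * Psq (fun y : ℝ => (y : ℂ) * ψ y) x
        + Psq (fun y : ℝ => (y : ℂ) ^ 2 * ψ y) x)
      - (1 / 3) * ((x : ℂ) ^ 2 * Psq ψ x
        + (x : ℂ) * Psq (fun y : ℝ => (y : ℂ) * ψ y) x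
        + Psq (fun y : ℝ => (y : ℂ) ^ 2 * ψ y) x)
      = ((ℏ : ℂ) ^ 2 / 6) * ψ x := by
  have hψ1 : ∀ y : ℝ, HasDerivAt ψ (deriv ψ y) y := fun y =>
    ((hψ.differentiable (by norm_num)).differentiableAt).hasDerivAt (x := y)
  have hd : Differentiable ℝ (deriv ψ) := by
    have := (contDiff_succ_iff_deriv (n := 1)).mp hψ
    exact this.2.2.differentiable (by norm_num)
  have hψ2 : ∀ y : ℝ, HasDerivAt (deriv ψ) (deriv (deriv ψ) y) y := fun y =>
    (hd y).hasDerivAt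
  have hx : ∀ y : ℝ, HasDerivAt (fun t : ℝ => (t : ℂ)) 1 y := fun y => by
    simpa using (hasDerivAt_id y).ofReal_comp
  -- first derivatives
  have hg1 : ∀ y : ℝ, HasDerivAt (fun t : ℝ => (t : ℂ) * ψ t)
      (ψ y + (y : ℂ) * deriv ψ y) y := fun y => by
    exact ((hx y).mul (hψ1 y)).congr_deriv (by ring)
  have hg2 : ∀ y : ℝ, HasDerivAt (fun t : ℝ => (t : ℂ) ^ 2 * ψ t)
      (2 * (y : ℂ) * ψ y + (y : ℂ) ^ 2 * deriv ψ y) y := fun y => by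
    have h : HasDerivAt (fun t : ℝ => (t : ℂ) ^ 2) (2 * (y : ℂ)) y := by
      have := (hx y).mul (hx y)
      simp only [one_mul, mul_one] at this
      exact ((hx y).pow 2).congr_deriv (by norm_num)
    exact (h.mul (hψ1 y)).congr_deriv (by ring)
  have hdg1 : deriv (fun t : ℝ => (t : ℂ) * ψ t)
      = fun y : ℝ => ψ y + (y : ℂ) * deriv ψ y := funext fun y => (hg1 y).deriv
  have hdg2 : deriv (fun t : ℝ => (t : ℂ) ^ 2 * ψ t)
      = fun y : ℝ => 2 * (y : ℂ) * ψ y + (y : ℂ) ^ 2 * deriv ψ y :=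
    funext fun y => (hg2 y).deriv
  -- second derivatives at x
  have hdd1 : deriv (deriv (fun t : ℝ => (t : ℂ) * ψ t)) x
      = 2 * deriv ψ x + (x : ℂ) * deriv (deriv ψ) x := by
    rw [hdg1]
    have : HasDerivAt (fun y : ℝ => ψ y + (y : ℂ) * deriv ψ y)
        (deriv ψ x + (deriv ψ x + (x : ℂ) * deriv (deriv ψ) x)) x :=
      (hψ1 x).add (((hx x).mul (hψ2 x)).congr_deriv (by ring))
    rw [this.deriv]; ring
  have hdd2 : deriv (deriv (fun t : ℝ => (t : ℂ) ^ 2 * ψ t)) x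
      = 2 * ψ x + 4 * (x : ℂ) * deriv ψ x + (x : ℂ) ^ 2 * deriv (deriv ψ) x := by
    rw [hdg2]
    have h1 : HasDerivAt (fun y : ℝ => 2 * (y : ℂ) * ψ y)
        (2 * ψ x + 2 * (x : ℂ) * deriv ψ x) x := by
      have := ((hx x).const_mul (2 : ℂ)).mul (hψ1 x)
      exact this.congr_deriv (by ring)
    have hp : HasDerivAt (fun t : ℝ => (t : ℂ) ^ 2) (2 * (x : ℂ)) x := by
      have := (hx x).mul (hx x)
      simp only [one_mul, mul_one] at this
      exact ((hx x).pow 2).congr_deriv (by norm_num)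
    have h2 : HasDerivAt (fun y : ℝ => (y : ℂ) ^ 2 * deriv ψ y)
        (2 * (x : ℂ) * deriv ψ x + (x : ℂ) ^ 2 * deriv (deriv ψ) x) x :=
      hp.mul (hψ2 x)
    rw [HasDerivAt.deriv (f := fun y : ℝ => 2 * (y : ℂ) * ψ y + (y : ℂ) ^ 2 * deriv ψ y) (h1.add h2)]; ring
  rw [hPsq, hPsq, hPsq, hdd1, hdd2]
  ring
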